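/- arXiv:1303.0035 — 6 statements merged into one kernel-verified Lean document; each statement's English description precedes it below -/
import Mathlib

section
/- The map that sends a total valid coloring C of a finite simple graph G to the set of edges of G both of whose endpoints are colored black by C is a bijection between the set of total valid colorings of G and the set of dominating induced matchings of G. -/
variable {V : Type*}

/-- An edge `e` dominates an edge `f` if they share a vertex
(in particular every edge dominates itself). -/
def Dominates (e f : Sym2 V) : Prop := ∃ v, v ∈ e ∧ v ∈ f

/-- A set of edges `E'` of a simple graph `G` is a dominating induced matching
if every edge of `G` is dominated by exactly one edge of `E'`. -/
def IsDIM (G : SimpleGraph V) (E' : Set (Sym2 V)) : Prop :=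
  E' ⊆ G.edgeSet ∧ ∀ f ∈ G.edgeSet, ∃! e, e ∈ E' ∧ Dominates e f
/-- A total coloring (`true` = black, `false` = white) of the vertices of `G` is valid
if no two white vertices are adjacent and every black vertex has exactly one
black neighbor. -/
def ValidColoring (G : SimpleGraph V) (C : V → Bool) : Prop :=
  (∀ u v, G.Adj u v → ¬(C u = false ∧ C v = false)) ∧
  (∀ v, C v = true → ∃! u, G.Adj v u ∧ C u = true)

/-- If `v ∈ e` and `e` is an edge of `G`, then `e = s(v, w)` for some neighbor `w`. -/
lemma edge_other {G : SimpleGraph V} {e : Sym2 V} (he : e ∈ G.edgeSet) {v : V} (hv : v ∈ e) :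
    ∃ w, G.Adj v w ∧ e = s(v, w) := by
  induction e using Sym2.ind with
  | _ a b =>
    rw [SimpleGraph.mem_edgeSet] at he
    rw [Sym2.mem_iff] at hv
    rcases hv with rfl | rfl
    · exact ⟨b, he, rfl⟩
    · exact ⟨a, he.symm, Sym2.eq_swap⟩

/-- In a valid coloring, the edge set image of a black vertex's neighborhood:
if `e` is an all-black edge containing `y`, then `e = s(y, w)` where `w` is the
unique black neighbor of `y`. -/
lemma black_edge_eq {G : SimpleGraph V} {C : V → Bool}
    {e : Sym2 V} (he : e ∈ G.edgeSet) (hall : ∀ x ∈ e, C x = true)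
    {y w : V} (hy : y ∈ e)
    (huniq : ∀ z, G.Adj y z ∧ C z = true → z = w) : e = s(y, w) := by
  obtain ⟨z, hz, rfl⟩ := edge_other he hy
  have : z = w := huniq z ⟨hz, hall z (by simp)⟩
  subst this; rfl

/-- In a valid coloring, a vertex is black iff it belongs to an all-black edge. -/
lemma black_iff_mem {G : SimpleGraph V} {C : V → Bool} (h : ValidColoring G C) (v : V) :
    C v = true ↔ ∃ e, (e ∈ G.edgeSet ∧ ∀ x ∈ e, C x = true) ∧ v ∈ e := by
  constructor
  · intro hv
    obtain ⟨w, ⟨hadj, hw⟩, -⟩ := h.2 v hv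
    refine ⟨s(v, w), ⟨hadj, ?_⟩, by simp⟩
    intro x hx
    rw [Sym2.mem_iff] at hx
    rcases hx with rfl | rfl
    · exact hv
    · exact hw
  · rintro ⟨e, ⟨-, hall⟩, hv⟩
    exact hall v hv

theorem exists_unique_dom {G : SimpleGraph V} {C : V → Bool} (h : ValidColoring G C)
    {u v : V} (huv : G.Adj u v) :
    ∃! e, (e ∈ G.edgeSet ∧ ∀ x ∈ e, C x = true) ∧ Dominates e s(u, v) := by
  obtain ⟨hW, hB⟩ := h
  by_cases hu : C u = true
  · obtain ⟨w, ⟨hw, hwb⟩, hwu⟩ := hB u hu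
    have hmem : ∀ x ∈ (s(u, w) : Sym2 V), C x = true := by
      intro x hx
      rw [Sym2.mem_iff] at hx
      rcases hx with rfl | rfl
      · exact hu
      · exact hwb
    refine ⟨s(u, w), ⟨⟨hw, hmem⟩, u, by simp, by simp⟩, ?_⟩
    rintro e ⟨⟨he, hall⟩, x, hxe, hxf⟩
    rw [Sym2.mem_iff] at hxf
    rcases hxf with h | h
    · rw [h] at hxe
      exact black_edge_eq he hall hxe (fun z hz => hwu z hz)
    · -- e contains v, so C v = true; v has unique black neighbor, which is u
      rw [h] at hxe
      have hv : C v = true := hall v hxe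
      obtain ⟨z, ⟨hz, hzb⟩, hzu⟩ := hB v hv
      have hzu' : u = z := hzu u ⟨huv.symm, hu⟩
      subst hzu'
      have he' : e = s(v, u) := black_edge_eq he hall hxe (fun t ht => hzu t ht)
      have hvw : v = w := hwu v ⟨huv, hv⟩
      rw [he', hvw]
      exact Sym2.eq_swap
  · -- C u = false, hence C v = true
    have hu' : C u = false := by simpa using hu
    have hv : C v = true := by
      rcases Bool.eq_false_or_eq_true (C v) with h' | h'
      · exact h'
      · exact absurd ⟨hu', h'⟩ (hW u v huv)
    obtain ⟨w, ⟨hw, hwb⟩, hwu⟩ := hB v hv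
    have hmem : ∀ x ∈ (s(v, w) : Sym2 V), C x = true := by
      intro x hx
      rw [Sym2.mem_iff] at hx
      rcases hx with rfl | rfl
      · exact hv
      · exact hwb
    refine ⟨s(v, w), ⟨⟨hw, hmem⟩, v, by simp, by simp⟩, ?_⟩
    rintro e ⟨⟨he, hall⟩, x, hxe, hxf⟩
    rw [Sym2.mem_iff] at hxf
    rcases hxf with h | h
    · rw [h] at hxe
      exact absurd (hall u hxe) (by simp [hu'])
    · rw [h] at hxe
      exact black_edge_eq he hall hxe (fun z hz => hwu z hz)

/-- The map sending a total valid coloring to the set of edges both of whose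
endpoints are black is a bijection from total valid colorings to dominating
induced matchings. -/
theorem stmt_0 [Fintype V] (G : SimpleGraph V) :
    Set.BijOn (fun C : V → Bool => {e | e ∈ G.edgeSet ∧ ∀ v ∈ e, C v = true})
      {C | ValidColoring G C} {E' | IsDIM G E'} := by
  refine ⟨?_, ?_, ?_⟩
  · -- MapsTo
    intro C hC
    refine ⟨fun e he => he.1, ?_⟩
    intro f hf
    induction f using Sym2.ind with
    | _ u v =>
      rw [SimpleGraph.mem_edgeSet] at hf
      exact exists_unique_dom hC hf
  · -- InjOn
    intro C1 h1 C2 h2 heq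
    funext v
    have key : C1 v = true ↔ C2 v = true := by
      have heq' : ∀ e : Sym2 V, (e ∈ G.edgeSet ∧ ∀ x ∈ e, C1 x = true) ↔
          (e ∈ G.edgeSet ∧ ∀ x ∈ e, C2 x = true) := fun e => Set.ext_iff.mp heq e
      rw [black_iff_mem h1, black_iff_mem h2]
      constructor
      · rintro ⟨e, he, hv⟩
        exact ⟨e, (heq' e).mp he, hv⟩
      · rintro ⟨e, he, hv⟩
        exact ⟨e, (heq' e).mpr he, hv⟩
    rcases Bool.eq_false_or_eq_true (C1 v) with h' | h' <;>
      rcases Bool.eq_false_or_eq_true (C2 v) with h'' | h'' <;>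
      simp_all
  · -- SurjOn
    intro E' hE'
    obtain ⟨hsub, hdom⟩ := hE'
    classical
    set C : V → Bool := fun v => decide (∃ e ∈ E', v ∈ e) with hCdef
    have hC : ∀ v, C v = true ↔ ∃ e ∈ E', v ∈ e := by
      intro v; simp [hCdef]
    have huniq_edge : ∀ {e e' : Sym2 V} {u v : V}, e ∈ E' → e' ∈ E' →
        G.Adj u v → u ∈ e → v ∈ e' → e = e' := by
      intro e e' u v he he' hadj hu hv
      obtain ⟨d, -, hd⟩ := hdom s(u, v) (by rwa [SimpleGraph.mem_edgeSet])
      have h1 : e = d := hd e ⟨he, u, hu, by simp⟩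
      have h2 : e' = d := hd e' ⟨he', v, hv, by simp⟩
      rw [h1, h2]
    have hvalid : ValidColoring G C := by
      constructor
      · intro u v hadj ⟨hu, hv⟩
        obtain ⟨d, ⟨hd, x, hxd, hxf⟩, -⟩ := hdom s(u, v) (by rwa [SimpleGraph.mem_edgeSet])
        have : C x = true := (hC x).mpr ⟨d, hd, hxd⟩
        rw [Sym2.mem_iff] at hxf
        rcases hxf with rfl | rfl
        · rw [hu] at this; exact Bool.false_ne_true this
        · rw [hv] at this; exact Bool.false_ne_true this
      · intro v hv
        obtain ⟨e, he, hve⟩ := (hC v).mp hv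
        obtain ⟨w, hw, rfl⟩ := edge_other (hsub he) hve
        refine ⟨w, ⟨hw, (hC w).mpr ⟨s(v, w), he, by simp⟩⟩, ?_⟩
        rintro u ⟨hadj, hub⟩
        obtain ⟨e', he', hue'⟩ := (hC u).mp hub
        have : s(v, w) = e' := huniq_edge he he' hadj hve hue'
        have hu_mem : u ∈ (s(v, w) : Sym2 V) := this ▸ hue'
        rw [Sym2.mem_iff] at hu_mem
        rcases hu_mem with rfl | rfl
        · exact absurd hadj (G.irrefl)
        · rfl
    refine ⟨C, hvalid, ?_⟩
    ext f
    simp only [Set.mem_setOf_eq]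
    constructor
    · rintro ⟨hf, hall⟩
      induction f using Sym2.ind with
      | _ u v =>
        rw [SimpleGraph.mem_edgeSet] at hf
        obtain ⟨e1, he1, hu1⟩ := (hC u).mp (hall u (by simp))
        obtain ⟨e2, he2, hv2⟩ := (hC v).mp (hall v (by simp))
        have heq12 : e1 = e2 := huniq_edge he1 he2 hf hu1 hv2
        subst heq12
        have : e1 = s(u, v) := (Sym2.mem_and_mem_iff hf.ne).mp ⟨hu1, hv2⟩
        rw [← this]; exact he1
    · intro hf
      refine ⟨hsub hf, ?_⟩
      intro x hx
      exact (hC x).mpr ⟨f, hf, hx⟩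
end

section
/- Let G be a finite simple graph with a total valid coloring, and let a, b, c, d be distinct vertices forming an induced diamond: ab, ac, ad, bc, bd are edges of G and cd is not an edge. Then a and b are colored black and c and d are colored white. -/
variable {V : Type*}

/-- In an induced diamond, any total valid coloring colors the two degree-3
vertices black and the other two vertices white. -/
theorem stmt_2 [Fintype V] (G : SimpleGraph V) (C : V → Bool)
    (hC : ValidColoring G C) (a b c d : V)
    (hdist : a ≠ b ∧ a ≠ c ∧ a ≠ d ∧ b ≠ c ∧ b ≠ d ∧ c ≠ d)
    (hab : G.Adj a b) (hac : G.Adj a c) (had : G.Adj a d)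
    (hbc : G.Adj b c) (hbd : G.Adj b d) (hcd : ¬ G.Adj c d) :
    C a = true ∧ C b = true ∧ C c = false ∧ C d = false := by
  obtain ⟨h1, h2⟩ := hC
  have white : ∀ u v, G.Adj u v → C u = false → C v = true := by
    intro u v huv hu
    cases hv : C v with
    | false => exact absurd ⟨hu, hv⟩ (h1 u v huv)
    | true => rfl
  have Ha : C a = true := by
    by_contra h
    rw [Bool.not_eq_true] at h
    have hb := white a b hab h
    have hc := white a c hac h
    have hd := white a d had h
    obtain ⟨u, _, hu⟩ := h2 b hb
    exact hdist.2.2.2.2.2 ((hu c ⟨hbc, hc⟩).trans (hu d ⟨hbd, hd⟩).symm)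
  have Hb : C b = true := by
    by_contra h
    rw [Bool.not_eq_true] at h
    have hc := white b c hbc h
    have hd := white b d hbd h
    obtain ⟨u, _, hu⟩ := h2 a Ha
    exact hdist.2.2.2.2.2 ((hu c ⟨hac, hc⟩).trans (hu d ⟨had, hd⟩).symm)
  obtain ⟨u, _, hu⟩ := h2 a Ha
  have Hc : C c = false := by
    by_contra h
    rw [Bool.not_eq_false] at h
    exact hdist.2.2.2.1 ((hu b ⟨hab, Hb⟩).trans (hu c ⟨hac, h⟩).symm)
  have Hd : C d = false := by
    by_contra h
    rw [Bool.not_eq_false] at h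
    exact hdist.2.2.2.2.1 ((hu b ⟨hab, Hb⟩).trans (hu d ⟨had, h⟩).symm)
  exact ⟨Ha, Hb, Hc, Hd⟩
end

section
/- Let G be a finite simple graph with a total valid coloring, and let a, b, c, d be distinct vertices forming an induced paw: ab, ac, bc, ad are edges of G, while bd and cd are not edges. Then the two vertices of odd degree in the paw, namely a and d, receive different colors. -/
variable {V : Type*}

/-- In an induced paw, any total valid coloring gives the two odd-degree
vertices different colors. -/
theorem stmt_7 [Fintype V] (G : SimpleGraph V) (C : V → Bool)
    (hC : ValidColoring G C) (a b c d : V)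
    (hdist : a ≠ b ∧ a ≠ c ∧ a ≠ d ∧ b ≠ c ∧ b ≠ d ∧ c ≠ d)
    (hab : G.Adj a b) (hac : G.Adj a c) (hbc : G.Adj b c) (had : G.Adj a d)
    (hbd : ¬ G.Adj b d) (hcd : ¬ G.Adj c d) :
    C a ≠ C d := by
  obtain ⟨hW, hB⟩ := hC
  obtain ⟨_, _, had', hbc', hbd', hcd'⟩ := hdist
  intro h
  cases ha : C a with
  | false =>
    exact hW a d had ⟨ha, h ▸ ha⟩
  | true =>
    have hd : C d = true := h ▸ ha
    obtain ⟨u, _, huniq⟩ := hB a ha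
    -- at least one of b, c is black
    have hblack : C b = true ∨ C c = true := by
      rcases Bool.eq_false_or_eq_true (C b) with hb | hb
      · exact Or.inl hb
      · rcases Bool.eq_false_or_eq_true (C c) with hc | hc
        · exact Or.inr hc
        · exact absurd ⟨hb, hc⟩ (hW b c hbc)
    rcases hblack with hb | hc
    · have h1 := huniq b ⟨hab, hb⟩
      have h2 := huniq d ⟨had, hd⟩
      exact hbd' (h1.trans h2.symm)
    · have h1 := huniq c ⟨hac, hc⟩
      have h2 := huniq d ⟨had, hd⟩
      exact hcd' (h1.trans h2.symm)
end

section
/- Let G be a finite simple graph with a total valid coloring, and let v1, v2, v3, v4 be distinct vertices forming an induced 4-cycle: v1v2, v2v3, v3v4, v4v1 are edges of G, while v1v3 and v2v4 are not edges. Then any two adjacent vertices of the cycle receive different colors; that is, v1 and v3 receive one color and v2 and v4 receive the other. -/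
variable {V : Type*}

/-- In an induced 4-cycle, any total valid coloring gives adjacent vertices of
the cycle different colors: opposite vertices agree and adjacent ones differ. -/
theorem stmt_8 [Fintype V] (G : SimpleGraph V) (C : V → Bool)
    (hC : ValidColoring G C) (v₁ v₂ v₃ v₄ : V)
    (hdist : v₁ ≠ v₂ ∧ v₁ ≠ v₃ ∧ v₁ ≠ v₄ ∧ v₂ ≠ v₃ ∧ v₂ ≠ v₄ ∧ v₃ ≠ v₄)
    (h12 : G.Adj v₁ v₂) (h23 : G.Adj v₂ v₃) (h34 : G.Adj v₃ v₄) (h41 : G.Adj v₄ v₁)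
    (h13 : ¬ G.Adj v₁ v₃) (h24 : ¬ G.Adj v₂ v₄) :
    C v₁ = C v₃ ∧ C v₂ = C v₄ ∧ C v₁ ≠ C v₂ := by
  obtain ⟨hind, huniq⟩ := hC
  -- general lemma: adjacent pair on the cycle can't both be black
  have key : ∀ a b c d : V, G.Adj a b → G.Adj b c → G.Adj c d → G.Adj d a →
      c ≠ a → d ≠ b → C a = true → C b = true → False := by
    intro a b c d hab hbc hcd hda hca hdb ha hb
    obtain ⟨u, hu, hu'⟩ := huniq a ha
    obtain ⟨w, hw, hw'⟩ := huniq b hb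
    have hd : C d = false := by
      cases hCd : C d with
      | false => rfl
      | true =>
        have h1 : b = u := hu' b ⟨hab, hb⟩
        have h2 : d = u := hu' d ⟨hda.symm, hCd⟩
        exact absurd (h2.trans h1.symm) hdb
    have hc : C c = false := by
      cases hCc : C c with
      | false => rfl
      | true =>
        have h1 : a = w := hw' a ⟨hab.symm, ha⟩
        have h2 : c = w := hw' c ⟨hbc, hCc⟩
        exact absurd (h2.trans h1.symm) hca
    exact hind c d hcd ⟨hc, hd⟩
  obtain ⟨h12', h13', h14', h23', h24', h34'⟩ := hdist
  have ne12 : C v₁ ≠ C v₂ := by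
    intro h
    cases hc : C v₁ with
    | false => exact hind v₁ v₂ h12 ⟨hc, h ▸ hc⟩
    | true => exact key v₁ v₂ v₃ v₄ h12 h23 h34 h41 (Ne.symm h13') (Ne.symm h24') hc (h ▸ hc)
  have ne23 : C v₂ ≠ C v₃ := by
    intro h
    cases hc : C v₂ with
    | false => exact hind v₂ v₃ h23 ⟨hc, h ▸ hc⟩
    | true => exact key v₂ v₃ v₄ v₁ h23 h34 h41 h12 (Ne.symm h24') h13' hc (h ▸ hc)
  have ne34 : C v₃ ≠ C v₄ := by
    intro h
    cases hc : C v₃ with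
    | false => exact hind v₃ v₄ h34 ⟨hc, h ▸ hc⟩
    | true => exact key v₃ v₄ v₁ v₂ h34 h41 h12 h23 h13' h24' hc (h ▸ hc)
  refine ⟨?_, ?_, ne12⟩
  · revert ne12 ne23; cases C v₁ <;> cases C v₂ <;> cases C v₃ <;> simp
  · revert ne23 ne34; cases C v₂ <;> cases C v₃ <;> cases C v₄ <;> simp
end

section
/- Every dominating induced matching of a finite simple graph G is an induced matching of maximum cardinality: if D is a dominating induced matching of G and M is any induced matching of G, then |M| ≤ |D|. Consequently, any two dominating induced matchings of G have the same number of edges. -/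
variable {V : Type*}

/-- A set `M` of edges of `G` is an induced matching if no two distinct edges of
`M` share a vertex and no edge of `G` joins endpoints of two distinct edges of `M`. -/
def IsInducedMatching (G : SimpleGraph V) (M : Set (Sym2 V)) : Prop :=
  M ⊆ G.edgeSet ∧ ∀ e ∈ M, ∀ f ∈ M, e ≠ f →
    ∀ u v : V, u ∈ e → v ∈ f → u ≠ v ∧ ¬ G.Adj u v

lemma dim_isInducedMatching (G : SimpleGraph V) (E' : Set (Sym2 V)) (h : IsDIM G E') :
    IsInducedMatching G E' := by
  refine ⟨h.1, fun e he f hf hne u v hu hv => ?_⟩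
  constructor
  · rintro rfl
    have hfE : f ∈ G.edgeSet := h.1 hf
    obtain ⟨g, _, huniq⟩ := h.2 f hfE
    have h1 : e = g := huniq e ⟨he, u, hu, hv⟩
    have h2 : f = g := huniq f ⟨hf, u, hv, hv⟩
    exact hne (h1.trans h2.symm)
  · intro hadj
    have hgE : s(u, v) ∈ G.edgeSet := hadj
    obtain ⟨g, _, huniq⟩ := h.2 _ hgE
    have h1 : e = g := huniq e ⟨he, u, hu, by simp⟩
    have h2 : f = g := huniq f ⟨hf, v, hv, by simp⟩
    exact hne (h1.trans h2.symm)

lemma card_le_dim (G : SimpleGraph V) (D M : Finset (Sym2 V))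
    (hD : IsDIM G ↑D) (hM : IsInducedMatching G ↑M) : M.card ≤ D.card := by
  classical
  have key : ∀ f ∈ M, ∃ e, e ∈ D ∧ Dominates e f := by
    intro f hf
    obtain ⟨e, ⟨he, hd⟩, _⟩ := hD.2 f (hM.1 hf)
    exact ⟨e, he, hd⟩
  choose g hg using key
  refine Finset.card_le_card_of_injOn (fun f => if h : f ∈ M then g f h else f)
    (fun f hf => by simp [Finset.mem_coe.mp hf, (hg f hf).1]) ?_
  intro f1 h1 f2 h2 heq
  simp only [Finset.mem_coe] at h1 h2
  replace heq : g f1 h1 = g f2 h2 := by simpa [h1, h2] using heq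
  by_contra hne
  obtain ⟨u, hue, huf⟩ := (hg f1 h1).2
  obtain ⟨v, hve, hvf⟩ := (hg f2 h2).2
  obtain ⟨hune, hnadj⟩ := hM.2 f1 h1 f2 h2 hne u v huf hvf
  have heE : g f1 h1 ∈ G.edgeSet := hD.1 (hg f1 h1).1
  rw [heq] at hue
  have : g f2 h2 = s(u, v) := ((Sym2.mem_and_mem_iff hune).mp ⟨hue, hve⟩)
  rw [heq, this] at heE
  exact hnadj heE

/-- Every dominating induced matching is an induced matching of maximum
cardinality; consequently all dominating induced matchings have the same size. -/
theorem stmt_9 [Fintype V] (G : SimpleGraph V) (D M : Finset (Sym2 V))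
    (hD : IsDIM G ↑D) (hM : IsInducedMatching G ↑M) :
    M.card ≤ D.card ∧
      ∀ D' : Finset (Sym2 V), IsDIM G ↑D' → D'.card = D.card := by
  refine ⟨card_le_dim G D M hD hM, fun D' hD' => le_antisymm ?_ ?_⟩
  · exact card_le_dim G D D' hD (dim_isInducedMatching G _ hD')
  · exact card_le_dim G D' D hD' (dim_isInducedMatching G _ hD)
end

section
/- Let G be a finite simple graph with an edge-weight function w assigning a real number to each edge, let M be a real number, and define a new weight function w' by w'(e) = w(e) + M for every edge e. Then a dominating induced matching D of G minimizes the total weight (sum of edge weights over edges of D) with respect to w among all dominating induced matchings of G if and only if D minimizes the total weight with respect to w' among all dominating induced matchings of G. -/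
variable {V : Type*}

lemma Dominates.symm {e f : Sym2 V} (h : Dominates e f) : Dominates f e := by
  obtain ⟨v, h1, h2⟩ := h; exact ⟨v, h2, h1⟩

lemma dim_card_eq (G : SimpleGraph V) (D D' : Finset (Sym2 V))
    (hD : IsDIM G ↑D) (hD' : IsDIM G ↑D') : D.card = D'.card := by
  classical
  have h : ∀ e ∈ D, ∃! e', e' ∈ (↑D' : Set (Sym2 V)) ∧ Dominates e' e :=
    fun e he => hD'.2 e (hD.1 he)
  apply Finset.card_bij (fun e he => (h e he).exists.choose)
  · intro e he
    exact (h e he).exists.choose_spec.1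
  · intro e1 he1 e2 he2 heq
    set e' := (h e1 he1).exists.choose with he'
    have s1 := (h e1 he1).exists.choose_spec
    have s2 := (h e2 he2).exists.choose_spec
    have hmem : e' ∈ G.edgeSet := hD'.1 s1.1
    obtain ⟨u, _, hu⟩ := hD.2 e' hmem
    have h1 : e1 = u := hu e1 ⟨he1, s1.2.symm⟩
    have h2 : e2 = u := hu e2 ⟨he2, by rw [← heq] at s2; exact s2.2.symm⟩
    rw [h1, h2]
  · intro e' he'
    obtain ⟨e, ⟨heD, hdom⟩, _⟩ := hD.2 e' (hD'.1 he')
    have heD' : e ∈ D := heD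
    refine ⟨e, heD', ?_⟩
    have s := (h e heD').exists.choose_spec
    exact ((h e heD').unique ⟨s.1, s.2⟩ ⟨he', hdom.symm⟩)

/-- Shifting all edge weights by a constant `M` does not change which dominating
induced matchings have minimum total weight. -/
theorem stmt_10 [Fintype V] (G : SimpleGraph V) (w : Sym2 V → ℝ) (M : ℝ)
    (D : Finset (Sym2 V)) (hD : IsDIM G ↑D) :
    (∀ D' : Finset (Sym2 V), IsDIM G ↑D' →
        ∑ e ∈ D, w e ≤ ∑ e ∈ D', w e) ↔
      (∀ D' : Finset (Sym2 V), IsDIM G ↑D' →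
        ∑ e ∈ D, (w e + M) ≤ ∑ e ∈ D', (w e + M)) := by
  have key : ∀ D' : Finset (Sym2 V), IsDIM G ↑D' →
      (∑ e ∈ D', (w e + M)) = (∑ e ∈ D', w e) + D.card * M := by
    intro D' hD'
    rw [Finset.sum_add_distrib, Finset.sum_const, nsmul_eq_mul,
      dim_card_eq G D D' hD hD']
  constructor
  · intro hmin D' hD'
    rw [key D hD, key D' hD']
    linarith [hmin D' hD']
  · intro hmin D' hD'
    have := hmin D' hD'
    rw [key D hD, key D' hD'] at this
    linarith
end
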